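/- Let n be a positive integer, p ≥ 0, q ≥ 0, and j a nonnegative integer, and let X = Y/n where Y ~ Poisson(np). Define g_{j,q}(X) = Σ_{k=0}^{j} C(j,k)·(−q)^{j−k}·∏_{h=0}^{k−1}(X − h/n), where the empty product (k = 0) equals 1. Then E[g_{j,q}(X)] = (p − q)^j and E[(g_{j,q}(X))²] = Σ_{k=0}^{j} C(j,k)²·(p − q)^{2(j−k)}·p^k·k!/n^k. Moreover, if p > 0 and M ≥ max{ n(p−q)²/p, j }, then E[(g_{j,q}(X))²] ≤ (2Mp/n)^j. -/

import Mathlib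

open scoped BigOperators

/-- The Poisson(lam) probability mass function on the nonnegative integers. -/
noncomputable def poissonPMF (lam : ℝ) (k : ℕ) : ℝ :=
  Real.exp (-lam) * lam ^ k / (Nat.factorial k)

/-- Expectation of `f` under the Poisson(lam) distribution. -/
noncomputable def poissonE (lam : ℝ) (f : ℕ → ℝ) : ℝ :=
  ∑' k : ℕ, poissonPMF lam k * f k

/-- The estimator `g_{j,q}(X) = Σ_{k=0}^{j} C(j,k)·(−q)^{j−k}·∏_{h=0}^{k−1}(X − h/n)`
(the empty product, for `k = 0`, equals `1`). -/
noncomputable def gEst (n : ℕ) (q : ℝ) (j : ℕ) (X : ℝ) : ℝ :=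
  ∑ k ∈ Finset.range (j + 1),
    (Nat.choose j k : ℝ) * (-q) ^ (j - k) * ∏ h ∈ Finset.range k, (X - (h : ℝ) / n)


open scoped BigOperators


lemma prodCastFactorial : ∀ (k m : ℕ),
    (∏ h ∈ Finset.range k, (((m + k : ℕ) : ℝ) - h)) * (Nat.factorial m) =
      (Nat.factorial (m + k))
  | 0, m => by simp
  | k + 1, m => by
    have h := prodCastFactorial k (m + 1)
    rw [Finset.prod_range_succ]
    have e1 : ∀ h' : ℕ, (((m + (k + 1) : ℕ) : ℝ) - h') = (((m + 1) + k : ℕ) : ℝ) - h' := by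
      intro h'; push_cast; ring
    rw [Finset.prod_congr rfl fun h' _ => e1 h']
    have e2 : ((m + (k + 1) : ℕ) : ℝ) - (k : ℝ) = ((m + 1 : ℕ) : ℝ) := by push_cast; ring
    rw [e2]
    have e3 : m + (k + 1) = (m + 1) + k := by omega
    rw [e3, ← h]
    push_cast [Nat.factorial_succ]
    ring

lemma pmf_shift (lam : ℝ) (k m : ℕ) :
    poissonPMF lam (m + k) * ∏ h ∈ Finset.range k, (((m + k : ℕ) : ℝ) - h) =
      lam ^ k * poissonPMF lam m := by
  unfold poissonPMF
  have h := prodCastFactorial k m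
  push_cast at h
  have hm : (Nat.factorial m : ℝ) ≠ 0 := by exact_mod_cast (Nat.factorial_pos m).ne'
  have hmk : (Nat.factorial (m + k) : ℝ) ≠ 0 := by exact_mod_cast (Nat.factorial_pos (m + k)).ne'
  field_simp
  rw [pow_add]
  push_cast
  linear_combination (lam ^ m * lam ^ k) * h

lemma summable_pmf : ∀ lam : ℝ, Summable (poissonPMF lam) := by
  intro lam
  have := (Real.summable_pow_div_factorial lam).mul_left (Real.exp (-lam))
  refine this.congr fun m => ?_
  unfold poissonPMF
  rw [mul_div_assoc]

lemma tsum_pmf (lam : ℝ) : ∑' m, poissonPMF lam m = 1 := by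
  unfold poissonPMF
  have : ∀ m : ℕ, Real.exp (-lam) * lam ^ m / (Nat.factorial m)
      = Real.exp (-lam) * (lam ^ m / (Nat.factorial m)) := fun m => by rw [mul_div_assoc]
  rw [tsum_congr this, tsum_mul_left]
  have hexp : ∑' m : ℕ, lam ^ m / (Nat.factorial m) = Real.exp lam := by
    rw [Real.exp_eq_exp_ℝ, NormedSpace.exp_eq_tsum_div]
  rw [hexp, ← Real.exp_add]
  simp

lemma desc_vanish (lam : ℝ) (k : ℕ) :
    ∀ y ∉ Set.range (fun m : ℕ => m + k),
      poissonPMF lam y * ∏ h ∈ Finset.range k, ((y : ℝ) - h) = 0 := by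
  intro y hy
  have hyk : y < k := by
    by_contra hc
    exact hy ⟨y - k, by show y - k + k = y; omega⟩
  have : (∏ h ∈ Finset.range k, ((y : ℝ) - h)) = 0 :=
    Finset.prod_eq_zero (Finset.mem_range.2 hyk) (by simp)
  rw [this, mul_zero]

lemma summable_pmf_desc (lam : ℝ) (k : ℕ) :
    Summable (fun y : ℕ => poissonPMF lam y * ∏ h ∈ Finset.range k, ((y : ℝ) - h)) := by
  rw [← Function.Injective.summable_iff (add_left_injective k) (desc_vanish lam k)]
  have : ((fun y : ℕ => poissonPMF lam y * ∏ h ∈ Finset.range k, ((y : ℝ) - h)) ∘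
      (fun m : ℕ => m + k)) = fun m : ℕ => lam ^ k * poissonPMF lam m := by
    funext m
    exact pmf_shift lam k m
  rw [this]
  exact (summable_pmf lam).mul_left _

lemma tsum_pmf_desc (lam : ℝ) (k : ℕ) :
    ∑' y : ℕ, poissonPMF lam y * ∏ h ∈ Finset.range k, ((y : ℝ) - h) = lam ^ k := by
  rw [← Function.Injective.tsum_eq (add_left_injective k)
    (Function.support_subset_iff.mpr fun y hy => by
      by_contra hr
      exact hy (desc_vanish lam k y hr))]
  have : ∀ m : ℕ, poissonPMF lam (m + k) * ∏ h ∈ Finset.range k, (((m + k : ℕ) : ℝ) - h)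
      = lam ^ k * poissonPMF lam m := fun m => pmf_shift lam k m
  rw [tsum_congr this, tsum_mul_left, tsum_pmf, mul_one]


lemma poissonE_sum {ι : Type*} (lam : ℝ) (s : Finset ι) (c : ι → ℝ) (d : ι → ℕ) :
    poissonE lam (fun y => ∑ i ∈ s, c i * ∏ h ∈ Finset.range (d i), ((y : ℝ) - h)) =
      ∑ i ∈ s, c i * lam ^ (d i) := by
  unfold poissonE
  have h1 : ∀ y : ℕ, poissonPMF lam y * ∑ i ∈ s, c i * ∏ h ∈ Finset.range (d i), ((y : ℝ) - h)
      = ∑ i ∈ s, c i * (poissonPMF lam y * ∏ h ∈ Finset.range (d i), ((y : ℝ) - h)) := by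
    intro y
    rw [Finset.mul_sum]
    exact Finset.sum_congr rfl fun i _ => by ring
  rw [tsum_congr h1, Summable.tsum_finsetSum fun i _ => (summable_pmf_desc lam (d i)).mul_left (c i)]
  exact Finset.sum_congr rfl fun i _ => by
    rw [tsum_mul_left, tsum_pmf_desc]

lemma choose_step (k i : ℕ) :
    (Nat.choose k i : ℝ) * ((k : ℝ) - i) = (Nat.choose k (i + 1) : ℝ) * (i + 1) := by
  rcases le_or_gt i k with h | h
  · have : ((k : ℝ) - i) = ((k - i : ℕ) : ℝ) := by
      rw [Nat.cast_sub h]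
    rw [this]
    exact_mod_cast (Nat.choose_succ_right_eq k i).symm
  · rw [Nat.choose_eq_zero_of_lt h, Nat.choose_eq_zero_of_lt (by omega)]
    simp

lemma prod_mul_prod (x : ℝ) (k : ℕ) : ∀ l : ℕ,
    (∏ h ∈ Finset.range k, (x - h)) * (∏ h ∈ Finset.range l, (x - h)) =
      ∑ i ∈ Finset.range (l + 1), (Nat.choose k i : ℝ) * (Nat.choose l i : ℝ) *
        (Nat.factorial i : ℝ) * ∏ h ∈ Finset.range (k + l - i), (x - h)
  | 0 => by simp
  | l + 1 => by
    have IH := prod_mul_prod x k l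
    rw [Finset.prod_range_succ, ← mul_assoc, IH, Finset.sum_mul]
    -- each term: c i * P(k+l-i) * (x - l) = c i * P(k+l+1-i) + c' i * P(k+l-i)
    have key : ∀ i ∈ Finset.range (l + 1),
        (Nat.choose k i : ℝ) * (Nat.choose l i : ℝ) * (Nat.factorial i : ℝ) *
          (∏ h ∈ Finset.range (k + l - i), (x - h)) * (x - l)
        = (Nat.choose k i : ℝ) * (Nat.choose l i : ℝ) * (Nat.factorial i : ℝ) *
            (∏ h ∈ Finset.range (k + (l + 1) - i), (x - h))
          + (Nat.choose k (i + 1) : ℝ) * (Nat.choose l i : ℝ) * (Nat.factorial (i + 1) : ℝ) *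
            (∏ h ∈ Finset.range (k + l - i), (x - h)) := by
      intro i hi
      have hil : i ≤ l := by simpa [Nat.lt_succ_iff] using hi
      have hcast : ((k + l - i : ℕ) : ℝ) = (k : ℝ) + l - i := by
        have : k + l - i = k + (l - i) := by omega
        rw [this]
        push_cast [Nat.cast_sub hil]
        ring
      have hsplit : x - (l : ℝ) = (x - ((k + l - i : ℕ) : ℝ)) + ((k : ℝ) - i) := by
        rw [hcast]; ring
      rw [hsplit, mul_add]
      congr 1
      · rw [mul_assoc, ← Finset.prod_range_succ (fun h => x - (h : ℝ)) (k + l - i)]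
        have : k + l - i + 1 = k + (l + 1) - i := by omega
        rw [this, mul_assoc]
      · have : (Nat.choose k i : ℝ) * (Nat.choose l i : ℝ) * (Nat.factorial i : ℝ) *
            (∏ h ∈ Finset.range (k + l - i), (x - h)) * ((k : ℝ) - i)
            = ((Nat.choose k i : ℝ) * ((k : ℝ) - i)) * (Nat.choose l i : ℝ) *
              (Nat.factorial i : ℝ) * (∏ h ∈ Finset.range (k + l - i), (x - h)) := by ring
        rw [this, choose_step]
        push_cast [Nat.factorial_succ]
        ring
    rw [Finset.sum_congr rfl key, Finset.sum_add_distrib]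
    -- now: S1 + S2 = target
    -- target: sum over range (l+2)
    rw [Finset.sum_range_succ' (fun i => (Nat.choose k i : ℝ) * (Nat.choose (l + 1) i : ℝ) *
      (Nat.factorial i : ℝ) * ∏ h ∈ Finset.range (k + (l + 1) - i), (x - h)) (l + 1)]
    -- S1 = sum over range (l+1) of g i, peel first
    rw [Finset.sum_range_succ' (fun i => (Nat.choose k i : ℝ) * (Nat.choose l i : ℝ) *
      (Nat.factorial i : ℝ) * ∏ h ∈ Finset.range (k + (l + 1) - i), (x - h)) l]
    -- expand the RHS sum with Pascal
    have pascal : ∀ i ∈ Finset.range (l + 1),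
        (Nat.choose k (i + 1) : ℝ) * (Nat.choose (l + 1) (i + 1) : ℝ) *
          (Nat.factorial (i + 1) : ℝ) * ∏ h ∈ Finset.range (k + (l + 1) - (i + 1)), (x - h)
        = (Nat.choose k (i + 1) : ℝ) * (Nat.choose l (i + 1) : ℝ) *
            (Nat.factorial (i + 1) : ℝ) * (∏ h ∈ Finset.range (k + (l + 1) - (i + 1)), (x - h))
          + (Nat.choose k (i + 1) : ℝ) * (Nat.choose l i : ℝ) *
            (Nat.factorial (i + 1) : ℝ) * (∏ h ∈ Finset.range (k + l - i), (x - h)) := by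
      intro i hi
      have h1 : k + (l + 1) - (i + 1) = k + l - i := by omega
      rw [h1, Nat.choose_succ_succ l i]
      push_cast
      ring
    rw [Finset.sum_congr rfl pascal, Finset.sum_add_distrib]
    -- S3 over range(l+1) vs range l: last term zero
    rw [Finset.sum_range_succ (fun i => (Nat.choose k (i + 1) : ℝ) * (Nat.choose l (i + 1) : ℝ) *
      (Nat.factorial (i + 1) : ℝ) * ∏ h ∈ Finset.range (k + (l + 1) - (i + 1)), (x - h)) l]
    rw [Nat.choose_succ_self l]
    simp only [Nat.cast_zero, mul_zero, zero_mul, zero_add, add_zero, Nat.choose_zero_right, Nat.cast_one]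
    ring

lemma S_eval (p q : ℝ) (j i : ℕ) (hij : i ≤ j) :
    ∑ k ∈ Finset.range (j + 1),
      (Nat.choose j k : ℝ) * (Nat.choose k i : ℝ) * (-q) ^ (j - k) * p ^ (k - i)
    = (Nat.choose j i : ℝ) * (p - q) ^ (j - i) := by
  rw [Finset.range_eq_Ico, ← Finset.sum_Ico_consecutive _ (Nat.zero_le i) (by omega : i ≤ j + 1)]
  have hzero : ∑ k ∈ Finset.Ico 0 i,
      (Nat.choose j k : ℝ) * (Nat.choose k i : ℝ) * (-q) ^ (j - k) * p ^ (k - i) = 0 := by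
    apply Finset.sum_eq_zero
    intro k hk
    have : k < i := (Finset.mem_Ico.mp hk).2
    rw [Nat.choose_eq_zero_of_lt this]
    simp
  rw [hzero, zero_add, Finset.sum_Ico_eq_sum_range]
  have hlen : j + 1 - i = (j - i) + 1 := by omega
  rw [hlen]
  have hterm : ∀ m ∈ Finset.range ((j - i) + 1),
      (Nat.choose j (i + m) : ℝ) * (Nat.choose (i + m) i : ℝ) * (-q) ^ (j - (i + m)) *
        p ^ (i + m - i)
      = (Nat.choose j i : ℝ) * (p ^ m * (-q) ^ ((j - i) - m) * (Nat.choose (j - i) m : ℝ)) := by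
    intro m hm
    have hmle : m ≤ j - i := by simpa [Nat.lt_succ_iff] using hm
    have h1 : j - (i + m) = (j - i) - m := by omega
    have h2 : i + m - i = m := by omega
    have h3 : (Nat.choose j (i + m)) * (Nat.choose (i + m) i) =
        (Nat.choose j i) * (Nat.choose (j - i) m) := by
      have := Nat.choose_mul (n := j) (show i ≤ i + m by omega)
      simpa [h2] using this
    rw [h1, h2]
    have h3' : (Nat.choose j (i + m) : ℝ) * (Nat.choose (i + m) i : ℝ) =
        (Nat.choose j i : ℝ) * (Nat.choose (j - i) m : ℝ) := by exact_mod_cast h3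
    calc (Nat.choose j (i + m) : ℝ) * (Nat.choose (i + m) i : ℝ) * (-q) ^ ((j - i) - m) * p ^ m
        = ((Nat.choose j (i + m) : ℝ) * (Nat.choose (i + m) i : ℝ)) * ((-q) ^ ((j - i) - m) * p ^ m) := by ring
      _ = ((Nat.choose j i : ℝ) * (Nat.choose (j - i) m : ℝ)) * ((-q) ^ ((j - i) - m) * p ^ m) := by rw [h3']
      _ = (Nat.choose j i : ℝ) * (p ^ m * (-q) ^ ((j - i) - m) * (Nat.choose (j - i) m : ℝ)) := by ring
  rw [Finset.sum_congr rfl hterm, ← Finset.mul_sum, ← add_pow p (-q) (j - i)]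
  ring_nf


lemma gEst_eq (n : ℕ) (hn : 0 < n) (q : ℝ) (j : ℕ) (y : ℕ) :
    gEst n q j ((y : ℝ) / n) = ∑ k ∈ Finset.range (j + 1),
      ((Nat.choose j k : ℝ) * (-q) ^ (j - k) / (n : ℝ) ^ k) *
        ∏ h ∈ Finset.range k, ((y : ℝ) - h) := by
  have hn0 : (n : ℝ) ≠ 0 := Nat.cast_ne_zero.mpr hn.ne'
  unfold gEst
  refine Finset.sum_congr rfl fun k _ => ?_
  have hprod : (∏ h ∈ Finset.range k, ((y : ℝ) / n - (h : ℝ) / n)) =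
      (∏ h ∈ Finset.range k, ((y : ℝ) - h)) / (n : ℝ) ^ k := by
    rw [show ((n : ℝ) ^ k) = ∏ _h ∈ Finset.range k, (n : ℝ) by
        rw [Finset.prod_const, Finset.card_range], ← Finset.prod_div_distrib]
    refine Finset.prod_congr rfl fun h _ => ?_
    rw [div_sub_div_same]
  rw [hprod]
  ring

lemma moment1 (n : ℕ) (hn : 0 < n) (p q : ℝ) (j : ℕ) :
    poissonE ((n : ℝ) * p) (fun y => gEst n q j ((y : ℝ) / n)) = (p - q) ^ j := by
  have hn0 : (n : ℝ) ≠ 0 := Nat.cast_ne_zero.mpr hn.ne'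
  calc poissonE ((n : ℝ) * p) (fun y => gEst n q j ((y : ℝ) / n))
      = poissonE ((n : ℝ) * p) (fun y => ∑ k ∈ Finset.range (j + 1),
          ((Nat.choose j k : ℝ) * (-q) ^ (j - k) / (n : ℝ) ^ k) *
            ∏ h ∈ Finset.range k, ((y : ℝ) - h)) := by
        unfold poissonE
        exact tsum_congr fun y => by simp only []; rw [gEst_eq n hn q j y]
    _ = ∑ k ∈ Finset.range (j + 1),
          ((Nat.choose j k : ℝ) * (-q) ^ (j - k) / (n : ℝ) ^ k) * ((n : ℝ) * p) ^ k :=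
        poissonE_sum _ _ _ _
    _ = (p - q) ^ j := by
        rw [show p - q = p + (-q) by ring, add_pow]
        refine Finset.sum_congr rfl fun k _ => ?_
        rw [mul_pow]
        field_simp

lemma term_eq (n : ℕ) (hn : 0 < n) (p q : ℝ) (j k l i : ℕ) :
    ((Nat.choose j k : ℝ) * (-q) ^ (j - k) / (n : ℝ) ^ k) *
      ((Nat.choose j l : ℝ) * (-q) ^ (j - l) / (n : ℝ) ^ l) *
      ((Nat.choose k i : ℝ) * (Nat.choose l i : ℝ) * (Nat.factorial i : ℝ)) *
      ((n : ℝ) * p) ^ (k + l - i)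
    = ((Nat.choose j k : ℝ) * (Nat.choose k i : ℝ) * (-q) ^ (j - k) * p ^ (k - i)) *
      ((Nat.choose j l : ℝ) * (Nat.choose l i : ℝ) * (-q) ^ (j - l) * p ^ (l - i)) *
      ((Nat.factorial i : ℝ) * p ^ i / (n : ℝ) ^ i) := by
  have hn0 : (n : ℝ) ≠ 0 := Nat.cast_ne_zero.mpr hn.ne'
  by_cases hik : i ≤ k
  · by_cases hil : i ≤ l
    · rw [mul_pow]
      have hp3 : p ^ (k + l - i) = p ^ (k - i) * (p ^ (l - i) * p ^ i) := by
        rw [← pow_add, ← pow_add]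
        congr 1
        omega
      have hn3 : (n : ℝ) ^ (k + l - i) = (n : ℝ) ^ k * (n : ℝ) ^ l / (n : ℝ) ^ i := by
        rw [eq_div_iff (pow_ne_zero _ hn0), ← pow_add, ← pow_add]
        congr 1
        omega
      rw [hp3, hn3]
      have ha : (n:ℝ)^k * ((n:ℝ)^k)⁻¹ = 1 := mul_inv_cancel₀ (pow_ne_zero _ hn0)
      have hb : (n:ℝ)^l * ((n:ℝ)^l)⁻¹ = 1 := mul_inv_cancel₀ (pow_ne_zero _ hn0)
      linear_combination ((Nat.choose j k : ℝ) * (Nat.choose k i : ℝ) * (-q) ^ (j - k) * p ^ (k - i)) *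
          ((Nat.choose j l : ℝ) * (Nat.choose l i : ℝ) * (-q) ^ (j - l) * p ^ (l - i)) *
          ((Nat.factorial i : ℝ) * p ^ i / (n : ℝ) ^ i) * ((n:ℝ)^k * ((n:ℝ)^k)⁻¹ * hb + ha)
    · rw [Nat.choose_eq_zero_of_lt (by omega : l < i)]
      simp
  · rw [Nat.choose_eq_zero_of_lt (by omega : k < i)]
    simp

lemma moment2 (n : ℕ) (hn : 0 < n) (p q : ℝ) (j : ℕ) :
    poissonE ((n : ℝ) * p) (fun y => (gEst n q j ((y : ℝ) / n)) ^ 2) =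
      ∑ k ∈ Finset.range (j + 1),
        (Nat.choose j k : ℝ) ^ 2 * (p - q) ^ (2 * (j - k)) * p ^ k * (Nat.factorial k) /
          (n : ℝ) ^ k := by
  have hn0 : (n : ℝ) ≠ 0 := Nat.cast_ne_zero.mpr hn.ne'
  -- pointwise expansion
  have hpt : ∀ y : ℕ, (gEst n q j ((y : ℝ) / n)) ^ 2 =
      ∑ w ∈ (Finset.range (j + 1) ×ˢ Finset.range (j + 1)) ×ˢ Finset.range (j + 1),
        (((Nat.choose j w.1.1 : ℝ) * (-q) ^ (j - w.1.1) / (n : ℝ) ^ w.1.1) *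
          ((Nat.choose j w.1.2 : ℝ) * (-q) ^ (j - w.1.2) / (n : ℝ) ^ w.1.2) *
          ((Nat.choose w.1.1 w.2 : ℝ) * (Nat.choose w.1.2 w.2 : ℝ) * (Nat.factorial w.2 : ℝ))) *
        ∏ h ∈ Finset.range (w.1.1 + w.1.2 - w.2), ((y : ℝ) - h) := by
    intro y
    rw [Finset.sum_product, sq, gEst_eq n hn, Finset.sum_mul_sum]
    rw [Finset.sum_product]
    refine Finset.sum_congr rfl fun k hk => ?_
    refine Finset.sum_congr rfl fun l hl => ?_
    have hlj : l + 1 ≤ j + 1 := by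
      simp only [Finset.mem_range] at hl
      omega
    have hmul : ((Nat.choose j k : ℝ) * (-q) ^ (j - k) / (n : ℝ) ^ k *
          ∏ h ∈ Finset.range k, ((y : ℝ) - h)) *
        ((Nat.choose j l : ℝ) * (-q) ^ (j - l) / (n : ℝ) ^ l *
          ∏ h ∈ Finset.range l, ((y : ℝ) - h))
        = ((Nat.choose j k : ℝ) * (-q) ^ (j - k) / (n : ℝ) ^ k) *
          ((Nat.choose j l : ℝ) * (-q) ^ (j - l) / (n : ℝ) ^ l) *
          ((∏ h ∈ Finset.range k, ((y : ℝ) - h)) * ∏ h ∈ Finset.range l, ((y : ℝ) - h)) := by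
      ring
    rw [hmul, prod_mul_prod, Finset.mul_sum]
    rw [← Finset.sum_subset (Finset.range_subset_range.2 hlj)
      (fun i _ hi => by
        rw [Nat.choose_eq_zero_of_lt (by simpa [Nat.lt_succ_iff, not_le] using hi : l < i)]
        simp)]
    refine Finset.sum_congr rfl fun i _ => ?_
    ring
  -- apply linearity
  have hE : poissonE ((n : ℝ) * p) (fun y => (gEst n q j ((y : ℝ) / n)) ^ 2) =
      ∑ w ∈ (Finset.range (j + 1) ×ˢ Finset.range (j + 1)) ×ˢ Finset.range (j + 1),
        (((Nat.choose j w.1.1 : ℝ) * (-q) ^ (j - w.1.1) / (n : ℝ) ^ w.1.1) *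
          ((Nat.choose j w.1.2 : ℝ) * (-q) ^ (j - w.1.2) / (n : ℝ) ^ w.1.2) *
          ((Nat.choose w.1.1 w.2 : ℝ) * (Nat.choose w.1.2 w.2 : ℝ) * (Nat.factorial w.2 : ℝ))) *
        ((n : ℝ) * p) ^ (w.1.1 + w.1.2 - w.2) := by
    calc poissonE ((n : ℝ) * p) (fun y => (gEst n q j ((y : ℝ) / n)) ^ 2)
        = poissonE ((n : ℝ) * p) (fun y =>
            ∑ w ∈ (Finset.range (j + 1) ×ˢ Finset.range (j + 1)) ×ˢ Finset.range (j + 1),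
              (((Nat.choose j w.1.1 : ℝ) * (-q) ^ (j - w.1.1) / (n : ℝ) ^ w.1.1) *
                ((Nat.choose j w.1.2 : ℝ) * (-q) ^ (j - w.1.2) / (n : ℝ) ^ w.1.2) *
                ((Nat.choose w.1.1 w.2 : ℝ) * (Nat.choose w.1.2 w.2 : ℝ) *
                  (Nat.factorial w.2 : ℝ))) *
              ∏ h ∈ Finset.range (w.1.1 + w.1.2 - w.2), ((y : ℝ) - h)) := by
          unfold poissonE
          exact tsum_congr fun y => by simp only []; rw [hpt y]
      _ = _ := poissonE_sum _ _ _ _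
  rw [hE]
  -- algebraic reduction of the triple sum
  rw [Finset.sum_product, Finset.sum_product]
  have hterm : ∀ k ∈ Finset.range (j + 1), ∀ l ∈ Finset.range (j + 1),
      ∀ i ∈ Finset.range (j + 1),
      (((Nat.choose j k : ℝ) * (-q) ^ (j - k) / (n : ℝ) ^ k) *
        ((Nat.choose j l : ℝ) * (-q) ^ (j - l) / (n : ℝ) ^ l) *
        ((Nat.choose k i : ℝ) * (Nat.choose l i : ℝ) * (Nat.factorial i : ℝ))) *
        ((n : ℝ) * p) ^ (k + l - i)
      = ((Nat.choose j k : ℝ) * (Nat.choose k i : ℝ) * (-q) ^ (j - k) * p ^ (k - i)) *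
        ((Nat.choose j l : ℝ) * (Nat.choose l i : ℝ) * (-q) ^ (j - l) * p ^ (l - i)) *
        ((Nat.factorial i : ℝ) * p ^ i / (n : ℝ) ^ i) :=
    fun k _ l _ i _ => term_eq n hn p q j k l i
  rw [Finset.sum_congr rfl fun k hk => Finset.sum_congr rfl fun l hl =>
    Finset.sum_congr rfl fun i hi => hterm k hk l hl i hi]
  -- swap sums to bring i outside
  rw [Finset.sum_congr rfl fun k _ => Finset.sum_comm, Finset.sum_comm]
  refine Finset.sum_congr rfl fun i hi => ?_
  have hij : i ≤ j := by simpa [Nat.lt_succ_iff] using hi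
  -- factor the double sum
  have hfactor : ∑ k ∈ Finset.range (j + 1), ∑ l ∈ Finset.range (j + 1),
      ((Nat.choose j k : ℝ) * (Nat.choose k i : ℝ) * (-q) ^ (j - k) * p ^ (k - i)) *
        ((Nat.choose j l : ℝ) * (Nat.choose l i : ℝ) * (-q) ^ (j - l) * p ^ (l - i)) *
        ((Nat.factorial i : ℝ) * p ^ i / (n : ℝ) ^ i)
      = ((∑ k ∈ Finset.range (j + 1),
            (Nat.choose j k : ℝ) * (Nat.choose k i : ℝ) * (-q) ^ (j - k) * p ^ (k - i)) *
          (∑ l ∈ Finset.range (j + 1),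
            (Nat.choose j l : ℝ) * (Nat.choose l i : ℝ) * (-q) ^ (j - l) * p ^ (l - i))) *
          ((Nat.factorial i : ℝ) * p ^ i / (n : ℝ) ^ i) := by
    rw [Finset.sum_mul_sum, Finset.sum_mul]
    refine Finset.sum_congr rfl fun k _ => ?_
    rw [Finset.sum_mul]
  rw [hfactor, S_eval p q j i hij]
  rw [two_mul, pow_add]
  ring

lemma moment2_bound (n : ℕ) (hn : 0 < n) (p q : ℝ) (j : ℕ) (M : ℝ) (hp : 0 < p)
    (hM : max ((n : ℝ) * (p - q) ^ 2 / p) (j : ℝ) ≤ M) :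
    ∑ k ∈ Finset.range (j + 1),
        (Nat.choose j k : ℝ) ^ 2 * (p - q) ^ (2 * (j - k)) * p ^ k * (Nat.factorial k) /
          (n : ℝ) ^ k ≤ (2 * M * p / n) ^ j := by
  have hn0 : (0 : ℝ) < n := by exact_mod_cast hn
  have hMj : (j : ℝ) ≤ M := le_trans (le_max_right _ _) hM
  have hM0 : 0 ≤ M := le_trans (Nat.cast_nonneg j) hMj
  have hpn : 0 ≤ p / n := div_nonneg hp.le hn0.le
  have h1 : (p - q) ^ 2 ≤ M * (p / n) := by
    have h2 : (n : ℝ) * (p - q) ^ 2 / p ≤ M := le_trans (le_max_left _ _) hM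
    rw [div_le_iff₀ hp] at h2
    calc (p - q) ^ 2 = (n : ℝ) * (p - q) ^ 2 / n := by field_simp
      _ ≤ M * p / n := by gcongr
      _ = M * (p / n) := by ring
  calc ∑ k ∈ Finset.range (j + 1),
        (Nat.choose j k : ℝ) ^ 2 * (p - q) ^ (2 * (j - k)) * p ^ k * (Nat.factorial k) /
          (n : ℝ) ^ k
      ≤ ∑ k ∈ Finset.range (j + 1), (Nat.choose j k : ℝ) * (M ^ j * (p / n) ^ j) := by
        refine Finset.sum_le_sum fun i hi => ?_
        have hij : i ≤ j := by simpa [Nat.lt_succ_iff] using hi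
        have e1 : (Nat.choose j i : ℝ) ^ 2 * (p - q) ^ (2 * (j - i)) * p ^ i *
              (Nat.factorial i) / (n : ℝ) ^ i
            = ((Nat.choose j i : ℝ) * ((Nat.factorial i : ℝ) * (Nat.choose j i : ℝ))) *
              ((p - q) ^ 2) ^ (j - i) * (p / n) ^ i := by
          rw [pow_mul, div_pow]
          ring
        rw [e1]
        have b1 : (Nat.factorial i : ℝ) * (Nat.choose j i : ℝ) ≤ M ^ i := by
          have : (Nat.descFactorial j i : ℝ) ≤ (j : ℝ) ^ i := by
            exact_mod_cast Nat.descFactorial_le_pow j i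
          calc (Nat.factorial i : ℝ) * (Nat.choose j i : ℝ)
              = (Nat.descFactorial j i : ℝ) := by
                exact_mod_cast (Nat.descFactorial_eq_factorial_mul_choose j i).symm
            _ ≤ (j : ℝ) ^ i := this
            _ ≤ M ^ i := pow_le_pow_left₀ (Nat.cast_nonneg j) hMj i
        have b2 : ((p - q) ^ 2) ^ (j - i) ≤ (M * (p / n)) ^ (j - i) :=
          pow_le_pow_left₀ (sq_nonneg _) h1 _
        calc (Nat.choose j i : ℝ) * ((Nat.factorial i : ℝ) * (Nat.choose j i : ℝ)) *
              ((p - q) ^ 2) ^ (j - i) * (p / n) ^ i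
            ≤ (Nat.choose j i : ℝ) * M ^ i * (M * (p / n)) ^ (j - i) * (p / n) ^ i := by
              gcongr
            _ = (Nat.choose j i : ℝ) * ((M ^ i * M ^ (j - i)) *
                ((p / n) ^ (j - i) * (p / n) ^ i)) := by
              rw [mul_pow]
              ring
            _ = (Nat.choose j i : ℝ) * (M ^ j * (p / n) ^ j) := by
              rw [← pow_add, ← pow_add, Nat.add_sub_cancel' hij,
                Nat.sub_add_cancel hij]
    _ = (2 * M * p / n) ^ j := by
        rw [← Finset.sum_mul]
        have : ∑ k ∈ Finset.range (j + 1), (Nat.choose j k : ℝ) = 2 ^ j := by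
          exact_mod_cast Nat.sum_range_choose j
        rw [this]
        rw [show (2 * M * p / n : ℝ) = 2 * (M * (p / n)) by ring, mul_pow, mul_pow]

/-- `g_{j,q}(X)`, `X = Y/n`, `Y ~ Poisson(np)`, is unbiased for `(p−q)^j`;
its second moment is given exactly, and is bounded by `(2Mp/n)^j` when
`M ≥ max{n(p−q)²/p, j}`. -/
theorem gEst_moments (n : ℕ) (hn : 0 < n) (p q : ℝ) (hp : 0 ≤ p) (hq : 0 ≤ q) (j : ℕ) :
    poissonE (n * p) (fun y => gEst n q j ((y : ℝ) / n)) = (p - q) ^ j ∧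
    poissonE (n * p) (fun y => (gEst n q j ((y : ℝ) / n)) ^ 2) =
      ∑ k ∈ Finset.range (j + 1),
        (Nat.choose j k : ℝ) ^ 2 * (p - q) ^ (2 * (j - k)) * p ^ k * (Nat.factorial k) /
          (n : ℝ) ^ k ∧
    ∀ M : ℝ, 0 < p → max ((n : ℝ) * (p - q) ^ 2 / p) (j : ℝ) ≤ M →
      poissonE (n * p) (fun y => (gEst n q j ((y : ℝ) / n)) ^ 2) ≤
        (2 * M * p / n) ^ j := by
  refine ⟨moment1 n hn p q j, moment2 n hn p q j, fun M hp' hM => ?_⟩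
  rw [moment2 n hn p q j]
  exact moment2_bound n hn p q j M hp' hM
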